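/- Let R be a commutative ring and let F, F′, F″ be the generalized Fibonacci sequences of parameter sequences t, t′, t″ : {n : ℕ // n ≥ 1} → R respectively (each sequence has value 1 at 0 and satisfies its defining recursion). If F = F′ ⋆ F″ (Cauchy convolution), then for every n ≥ 1 the parameters of the product are given by t n = t′ n − ∑_{j=1}^{n−1} t′(n−j) · t″ j + t″ n. -/

import Mathlib

private lemma range_succ_eq_insert (k : ℕ) :
    Finset.range (k + 1) = insert 0 (Finset.Icc 1 k) := by
  ext x; simp [Nat.lt_succ_iff]; omega

private lemma gfp_inv {R : Type*} [CommRing R] (σ F : ℕ → R) (h0 : F 0 = 1)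
    (hσ0 : σ 0 = 0)
    (hrec : ∀ k, 1 ≤ k → F k = ∑ j ∈ Finset.range (k + 1), σ j * F (k - j)) :
    (1 - PowerSeries.mk σ) * PowerSeries.mk F = 1 := by
  ext k
  rw [PowerSeries.coeff_mul, Finset.Nat.sum_antidiagonal_eq_sum_range_succ_mk]
  simp only [map_sub, PowerSeries.coeff_one, PowerSeries.coeff_mk, sub_mul, one_mul,
    Finset.sum_sub_distrib]
  have h1 : ∑ j ∈ Finset.range (k + 1), (if j = 0 then (1:R) else 0) * F (k - j) = F k := by
    rw [Finset.sum_eq_single 0]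
    · simp
    · intro b _ hb; simp [hb]
    · simp
  rcases Nat.eq_zero_or_pos k with hk | hk
  · subst hk; simp [h0, hσ0]
  · rw [h1, ← hrec k hk]
    simp [Nat.pos_iff_ne_zero.mp hk]

/-- If `F = F′ ⋆ F″` (Cauchy convolution) for GFP sequences with parameter
sequences `t, t′, t″`, then `t n = t′ n − ∑_{j=1}^{n−1} t′(n−j) t″ j + t″ n`. -/
theorem gfp_product_parameters {R : Type*} [CommRing R]
    (t t' t'' : {n : ℕ // n ≥ 1} → R) (F F' F'' : ℕ → R)
    (hF0 : F 0 = 1)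
    (hF : ∀ n, 1 ≤ n →
      F n = ∑ j ∈ (Finset.Icc 1 n).attach,
        t ⟨j.1, (Finset.mem_Icc.mp j.2).1⟩ * F (n - j.1))
    (hF'0 : F' 0 = 1)
    (hF' : ∀ n, 1 ≤ n →
      F' n = ∑ j ∈ (Finset.Icc 1 n).attach,
        t' ⟨j.1, (Finset.mem_Icc.mp j.2).1⟩ * F' (n - j.1))
    (hF''0 : F'' 0 = 1)
    (hF'' : ∀ n, 1 ≤ n →
      F'' n = ∑ j ∈ (Finset.Icc 1 n).attach,
        t'' ⟨j.1, (Finset.mem_Icc.mp j.2).1⟩ * F'' (n - j.1))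
    (hconv : ∀ n, F n = ∑ j ∈ Finset.range (n + 1), F' j * F'' (n - j)) :
    ∀ n : ℕ, ∀ hn : 1 ≤ n,
      t ⟨n, hn⟩ =
        t' ⟨n, hn⟩ -
          (∑ j ∈ (Finset.Icc 1 (n - 1)).attach,
            t' ⟨n - j.1, by have := Finset.mem_Icc.mp j.2; omega⟩ *
            t'' ⟨j.1, (Finset.mem_Icc.mp j.2).1⟩) +
        t'' ⟨n, hn⟩ := by
  classical
  -- coefficient functions
  set σ : ℕ → R := fun m => if h : 1 ≤ m then t ⟨m, h⟩ else 0 with hσdef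
  set σ' : ℕ → R := fun m => if h : 1 ≤ m then t' ⟨m, h⟩ else 0 with hσ'def
  set σ'' : ℕ → R := fun m => if h : 1 ≤ m then t'' ⟨m, h⟩ else 0 with hσ''def
  have key : ∀ (u : {n : ℕ // n ≥ 1} → R) (G : ℕ → R), G 0 = 1 →
      (∀ n, 1 ≤ n → G n = ∑ j ∈ (Finset.Icc 1 n).attach,
        u ⟨j.1, (Finset.mem_Icc.mp j.2).1⟩ * G (n - j.1)) →
      (1 - PowerSeries.mk (fun m => if h : 1 ≤ m then u ⟨m, h⟩ else 0)) *
        PowerSeries.mk G = 1 := by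
    intro u G hG0 hGrec
    apply gfp_inv _ _ hG0 (by simp)
    intro k hk
    rw [hGrec k hk, range_succ_eq_insert, Finset.sum_insert (by simp)]
    rw [← Finset.sum_attach (Finset.Icc 1 k)
      (fun j => (if h : 1 ≤ j then u ⟨j, h⟩ else 0) * G (k - j))]
    simp only [dif_neg (by omega : ¬ (1:ℕ) ≤ 0), zero_mul, zero_add]
    refine Finset.sum_congr rfl fun j _ => ?_
    rw [dif_pos ((Finset.mem_Icc.mp j.2).1)]
  have h := key t F hF0 hF
  have h' := key t' F' hF'0 hF'
  have h'' := key t'' F'' hF''0 hF''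
  have hA : PowerSeries.mk F = PowerSeries.mk F' * PowerSeries.mk F'' := by
    ext k
    rw [PowerSeries.coeff_mul, Finset.Nat.sum_antidiagonal_eq_sum_range_succ_mk]
    simp [hconv k]
  have hG : (1 - PowerSeries.mk σ) =
      (1 - PowerSeries.mk σ') * (1 - PowerSeries.mk σ'') := by
    calc (1 - PowerSeries.mk σ)
        = (1 - PowerSeries.mk σ) *
            (((1 - PowerSeries.mk σ') * PowerSeries.mk F') *
             ((1 - PowerSeries.mk σ'') * PowerSeries.mk F'')) := by
          rw [h', h'']; ring
      _ = ((1 - PowerSeries.mk σ') * (1 - PowerSeries.mk σ'')) *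
            ((1 - PowerSeries.mk σ) * (PowerSeries.mk F' * PowerSeries.mk F'')) := by
          ring
      _ = (1 - PowerSeries.mk σ') * (1 - PowerSeries.mk σ'') := by
          rw [← hA, h, mul_one]
  intro n hn
  have hc := congrArg (PowerSeries.coeff n) hG
  have hexp : (1 - PowerSeries.mk σ') * (1 - PowerSeries.mk σ'') =
      1 - PowerSeries.mk σ' - PowerSeries.mk σ''
        + PowerSeries.mk σ'' * PowerSeries.mk σ' := by ring
  rw [hexp] at hc
  have hn0 : n ≠ 0 := by omega
  simp only [map_sub, map_add, PowerSeries.coeff_one, PowerSeries.coeff_mk,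
    if_neg hn0] at hc
  -- compute coeff n (mk σ'' * mk σ')
  have hsplit : Finset.range (n + 1) = insert 0 (insert n (Finset.Icc 1 (n - 1))) := by
    ext x
    simp only [Finset.mem_range, Finset.mem_insert, Finset.mem_Icc]
    omega
  have hmul : (PowerSeries.coeff n) (PowerSeries.mk σ'' * PowerSeries.mk σ') =
      ∑ j ∈ (Finset.Icc 1 (n - 1)).attach,
        t' ⟨n - j.1, by have := Finset.mem_Icc.mp j.2; omega⟩ *
        t'' ⟨j.1, (Finset.mem_Icc.mp j.2).1⟩ := by
    rw [PowerSeries.coeff_mul, Finset.Nat.sum_antidiagonal_eq_sum_range_succ_mk]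
    simp only [PowerSeries.coeff_mk]
    rw [hsplit, Finset.sum_insert (by
      simp only [Finset.mem_insert, Finset.mem_Icc]; omega), Finset.sum_insert (by
      simp only [Finset.mem_Icc]; omega)]
    have e0 : σ'' 0 = 0 := by simp [hσ''def]
    have en : σ' (n - n) = 0 := by simp [hσ'def]
    rw [e0, en, zero_mul, mul_zero, zero_add, zero_add]
    rw [← Finset.sum_attach (Finset.Icc 1 (n - 1)) (fun j => σ'' j * σ' (n - j))]
    refine Finset.sum_congr rfl fun j _ => ?_
    have hj := Finset.mem_Icc.mp j.2
    have h2 : 1 ≤ n - j.1 := by omega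
    simp [hσ''def, hσ'def, hj.1, h2, mul_comm]
  rw [hmul] at hc
  have e1 : σ n = t ⟨n, hn⟩ := by rw [hσdef]; exact dif_pos hn
  have e2 : σ' n = t' ⟨n, hn⟩ := by rw [hσ'def]; exact dif_pos hn
  have e3 : σ'' n = t'' ⟨n, hn⟩ := by rw [hσ''def]; exact dif_pos hn
  rw [e1, e2, e3] at hc
  linear_combination -hc
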